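/- Let m be a positive integer with gcd(h,m)=1. Then the Frobenius-power map x ↦ x^{2^h} is an o-polynomial over GF(2^m). -/

import Mathlib

/-- `f` is an o-polynomial over the finite field `F` of characteristic 2. -/
def IsOPoly {F : Type*} [Field F] [Fintype F] (f : F → F) : Prop :=
  Function.Bijective f ∧ f 0 = 0 ∧
    ∀ s : F, Function.Bijective fun x : F =>
      (f (x + s) + f s) * x ^ (Fintype.card F - 2)

lemma coprime_pow_sub_one {h m : ℕ} (hh : Nat.gcd h m = 1) :
    Nat.Coprime (2 ^ h - 1) (2 ^ m - 1) := by
  rw [Nat.coprime_iff_gcd_eq_one]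
  by_contra hne
  obtain ⟨p, hp, hpd⟩ := Nat.exists_prime_and_dvd hne
  have h1 : p ∣ 2 ^ h - 1 := hpd.trans (Nat.gcd_dvd_left _ _)
  have h2 : p ∣ 2 ^ m - 1 := hpd.trans (Nat.gcd_dvd_right _ _)
  have e1 : (2 : ZMod p) ^ h = 1 := by
    have := (ZMod.natCast_eq_zero_iff _ p).2 h1
    push_cast [Nat.cast_sub (Nat.one_le_two_pow)] at this
    linear_combination this
  have e2 : (2 : ZMod p) ^ m = 1 := by
    have := (ZMod.natCast_eq_zero_iff _ p).2 h2
    push_cast [Nat.cast_sub (Nat.one_le_two_pow)] at this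
    linear_combination this
  have := (pow_gcd_eq_one (a := (2 : ZMod p))).2 ⟨e1, e2⟩
  rw [hh, pow_one] at this
  have : ((1 : ℕ) : ZMod p) = 0 := by push_cast; linear_combination this
  rw [ZMod.natCast_eq_zero_iff] at this
  exact hp.one_lt.ne' (Nat.eq_one_of_dvd_one this)

lemma pow_bijective {F : Type*} [Field F] [Fintype F] {N : ℕ} (hN : N ≠ 0)
    (hcop : Nat.Coprime N (Fintype.card F - 1)) :
    Function.Bijective (fun x : F => x ^ N) := by
  rw [Finite.injective_iff_bijective.symm]
  intro a b hab
  simp only at hab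
  rcases eq_or_ne a 0 with ha | ha
  · subst ha
    rw [zero_pow hN, eq_comm, pow_eq_zero_iff hN] at hab
    exact hab.symm
  rcases eq_or_ne b 0 with hb | hb
  · subst hb
    rw [zero_pow hN, pow_eq_zero_iff hN] at hab
    exact hab
  have hu : (Units.mk0 a ha) ^ N = (Units.mk0 b hb) ^ N := by
    ext; simpa using hab
  classical
  have hcop' : (Nat.card Fˣ).Coprime N := by
    rw [Nat.card_eq_fintype_card, Fintype.card_units]
    exact hcop.symm
  have := hcop'.pow_left_bijective.injective hu
  simpa using congrArg Units.val this

/-- the translation o-polynomials x ↦ x^{2^h}, gcd(h,m)=1. -/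
theorem stmt_7 {F : Type*} [Field F] [Fintype F]
    (m : ℕ) (hm : 0 < m) (hcard : Fintype.card F = 2 ^ m)
    (h : ℕ) (hh : Nat.gcd h m = 1) :
    IsOPoly fun x : F => x ^ 2 ^ h := by
  have hchar : CharP F 2 := by
    obtain ⟨n, hp, hcardp⟩ := FiniteField.card F (ringChar F)
    have hdvd : ringChar F ∣ 2 ^ m := by
      rw [← hcard, hcardp]; exact dvd_pow_self _ n.pos.ne'
    have : ringChar F = 2 :=
      (Nat.prime_dvd_prime_iff_eq hp Nat.prime_two).1 (hp.dvd_of_dvd_pow hdvd)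
    exact this ▸ ringChar.charP F
  haveI := hchar
  haveI : Fact (Nat.Prime 2) := ⟨Nat.prime_two⟩
  have h2m : (1:ℕ) ≤ 2 ^ h := Nat.one_le_two_pow
  have hq2 : (2:ℕ) ≤ Fintype.card F := Fintype.one_lt_card
  have hodd : Odd (2 ^ m - 1) :=
    Nat.Even.sub_odd Nat.one_le_two_pow (Nat.even_pow.mpr ⟨even_two, hm.ne'⟩) odd_one
  have hcop2 : Nat.Coprime (2 ^ h) (Fintype.card F - 1) := by
    rw [hcard]
    exact Nat.Coprime.pow_left _
      ((Nat.prime_two.coprime_iff_not_dvd).2 (by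
        rcases hodd with ⟨k, hk⟩; omega))
  refine ⟨pow_bijective (Nat.pow_pos two_pos).ne' hcop2, zero_pow (Nat.pow_pos two_pos).ne', ?_⟩
  intro s
  have key : (fun x : F => ((x + s) ^ 2 ^ h + s ^ 2 ^ h) * x ^ (Fintype.card F - 2))
      = fun x : F => x ^ (2 ^ h + (Fintype.card F - 2)) := by
    funext x
    rw [add_pow_char_pow, add_assoc, CharTwo.add_self_eq_zero, add_zero, pow_add]
  rw [key]
  apply pow_bijective (by omega)
  have harith : 2 ^ h + (Fintype.card F - 2) = (2 ^ h - 1) + (Fintype.card F - 1) := by omega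
  rw [harith, Nat.coprime_add_self_left, hcard]
  exact coprime_pow_sub_one hh
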